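/- arXiv:1011.3349 — 3 statements merged into one kernel-verified Lean document; each statement's English description precedes it below -/
import Mathlib

section
/- Let F be a field and suppose every wild F[z]-automorphism (f,g) of F[z][x,y] fails to lift to a z-fixing automorphism of the free associative algebra F⟨x,y,z⟩. Then for any wild F[z]-automorphism (f,g), neither f nor g can occur as a component of any z-fixing automorphism of F⟨x,y,z⟩ whose abelianization has that component; in particular f cannot be lifted to a z-coordinate of F⟨x,y,z⟩. -/
open MvPolynomial

noncomputable section

variable (F : Type) [Field F]

/-- The abelianization `F⟨x,y,z⟩ → F[z][x,y] ≅ F[x,y,z]`: it sends the free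
generators `x, y` to the commutative variables and `z` to the scalar `z ∈ F[z]`. -/
def ab : FreeAlgebra F (Fin 3) →ₐ[F] MvPolynomial (Fin 2) (Polynomial F) :=
  FreeAlgebra.lift F ![X 0, X 1, C Polynomial.X]

/-- Elementary `F[z]`-automorphisms of `F[z][x,y]`. -/
def IsElementary
    (φ : MvPolynomial (Fin 2) (Polynomial F) ≃ₐ[Polynomial F]
      MvPolynomial (Fin 2) (Polynomial F)) : Prop :=
  (∃ (α : F) (_ : α ≠ 0) (p : Polynomial (Polynomial F)),
      φ (X 0) = X 0 ∧
      φ (X 1) = C (Polynomial.C α) * X 1 + Polynomial.aeval (X 0) p) ∨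
  (∃ (α : F) (_ : α ≠ 0) (p : Polynomial (Polynomial F)),
      φ (X 1) = X 1 ∧
      φ (X 0) = C (Polynomial.C α) * X 0 + Polynomial.aeval (X 1) p)

/-- Linear (affine with invertible matrix) `F[z]`-automorphisms of `F[z][x,y]`. -/
def IsLinear
    (φ : MvPolynomial (Fin 2) (Polynomial F) ≃ₐ[Polynomial F]
      MvPolynomial (Fin 2) (Polynomial F)) : Prop :=
  ∃ a b c d e f : Polynomial F, IsUnit (a * d - b * c) ∧
    φ (X 0) = C a * X 0 + C b * X 1 + C e ∧
    φ (X 1) = C c * X 0 + C d * X 1 + C f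

/-- A wild `F[z]`-automorphism: not a composition of elementary and linear ones. -/
def IsWild
    (φ : MvPolynomial (Fin 2) (Polynomial F) ≃ₐ[Polynomial F]
      MvPolynomial (Fin 2) (Polynomial F)) : Prop :=
  φ ∉ Subgroup.closure {ψ | IsElementary F ψ ∨ IsLinear F ψ}

/-- `(f, g)` lifts to a `z`-fixing automorphism of the free algebra `F⟨x,y,z⟩`. -/
def LiftsToZAut (f g : MvPolynomial (Fin 2) (Polynomial F)) : Prop :=
  ∃ ψ : FreeAlgebra F (Fin 3) ≃ₐ[F] FreeAlgebra F (Fin 3),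
    ψ (FreeAlgebra.ι F 2) = FreeAlgebra.ι F 2 ∧
    ab F (ψ (FreeAlgebra.ι F 0)) = f ∧ ab F (ψ (FreeAlgebra.ι F 1)) = g

/-! ### Auxiliary developments -/

local notation "R" => Polynomial F
local notation "B" => MvPolynomial (Fin 2) (Polynomial F)

/-- Forward half of the identification `F[z][x,y] ≅ (F[z][y])[x]`. -/
def Efwd : B →ₐ[R] Polynomial (Polynomial R) :=
  MvPolynomial.aeval (![Polynomial.X, Polynomial.C Polynomial.X] :
    Fin 2 → Polynomial (Polynomial R))

/-- Backward half of the identification `F[z][x,y] ≅ (F[z][y])[x]`. -/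
def Ebwd : Polynomial (Polynomial R) →ₐ[R] B :=
  Polynomial.aevalTower (Polynomial.aeval (X 1)) (X 0)

/-- The identification `F[z][x,y] ≅ (F[z][y])[x]`. -/
def E : B ≃ₐ[R] Polynomial (Polynomial R) :=
  AlgEquiv.ofAlgHom (Efwd F) (Ebwd F)
    (by
      apply Polynomial.algHom_ext'
      · apply Polynomial.algHom_ext'
        · apply AlgHom.ext
          intro r
          simp only [AlgHom.coe_comp, Function.comp_apply, Polynomial.CAlgHom_apply]
          rw [← Polynomial.algebraMap_eq, ← Polynomial.algebraMap_eq,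
            ← IsScalarTower.algebraMap_apply]
          rw [(Ebwd F).commutes, (Efwd F).commutes]
          simp
        · simp [Efwd, Ebwd, Polynomial.CAlgHom]
      · simp [Efwd, Ebwd])
    (by
      apply MvPolynomial.algHom_ext
      intro i
      fin_cases i <;> simp [Efwd, Ebwd])

@[simp] lemma E_X0 : E F (X 0) = Polynomial.X := by
  simp [E, Efwd]

@[simp] lemma E_X1 : E F (X 1) = Polynomial.C Polynomial.X := by
  simp [E, Efwd]

@[simp] lemma Esymm_X : (E F).symm Polynomial.X = X 0 := by
  simp [E, Ebwd]

@[simp] lemma Esymm_C (s : Polynomial R) :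
    (E F).symm (Polynomial.C s) = Polynomial.aeval (X 1) s := by
  simp [E, Ebwd]

/-- Any `F[z]`-automorphism of `F[z][x,y]` fixing `y` is elementary. -/
lemma elementary_of_fix_X1 (σ : B ≃ₐ[R] B) (h : σ (X 1) = X 1) :
    IsElementary F σ := by
  set τ : Polynomial (Polynomial R) ≃ₐ[R] Polynomial (Polynomial R) :=
    ((E F).symm.trans σ).trans (E F) with hτdef
  have hτ_apply : ∀ x, τ x = E F (σ ((E F).symm x)) := fun x => rfl
  -- τ fixes all constants
  have hτC : ∀ s : Polynomial R, τ (Polynomial.C s) = Polynomial.C s := by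
    have : (τ : Polynomial (Polynomial R) →+* Polynomial (Polynomial R)).comp
        (Polynomial.C : Polynomial R →+* Polynomial (Polynomial R)) = Polynomial.C := by
      apply Polynomial.ringHom_ext
      · intro a
        have h1 : (Polynomial.C (Polynomial.C a) : Polynomial (Polynomial R)) =
            algebraMap R (Polynomial (Polynomial R)) a := by
          rw [Polynomial.algebraMap_apply, Polynomial.algebraMap_eq]
        simp only [RingHom.coe_comp, Function.comp_apply, RingHom.coe_coe, h1]
        exact τ.commutes a
      · simp only [RingHom.coe_comp, Function.comp_apply, RingHom.coe_coe]
        rw [← E_X1, hτ_apply, AlgEquiv.symm_apply_apply, h]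
    intro s
    exact RingHom.congr_fun this s
  have hτsymmC : ∀ s : Polynomial R, τ.symm (Polynomial.C s) = Polynomial.C s := by
    intro s
    apply τ.injective
    rw [AlgEquiv.apply_symm_apply, hτC]
  set q := τ Polynomial.X with hq
  set r := τ.symm Polynomial.X with hr
  -- τ is composition with q
  have hτcomp : ∀ p : Polynomial (Polynomial R), τ p = p.comp q := by
    have : (τ : Polynomial (Polynomial R) →+* Polynomial (Polynomial R)) =
        Polynomial.eval₂RingHom Polynomial.C q := by
      apply Polynomial.ringHom_ext
      · intro a
        simp [hτC]
      · simp
        exact hq.symm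
    intro p
    have := RingHom.congr_fun this p
    simpa [Polynomial.comp] using this
  have hτsymmcomp : ∀ p : Polynomial (Polynomial R), τ.symm p = p.comp r := by
    have : (τ.symm : Polynomial (Polynomial R) →+* Polynomial (Polynomial R)) =
        Polynomial.eval₂RingHom Polynomial.C r := by
      apply Polynomial.ringHom_ext
      · intro a
        simp [hτsymmC]
      · simp
        exact hr.symm
    intro p
    have := RingHom.congr_fun this p
    simpa [Polynomial.comp] using this
  have hrq : r.comp q = Polynomial.X := by
    rw [← hτcomp, hr, AlgEquiv.apply_symm_apply]
  have hqr : q.comp r = Polynomial.X := by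
    rw [← hτsymmcomp, hq, AlgEquiv.symm_apply_apply]
  have hdeg : r.natDegree * q.natDegree = 1 := by
    rw [← Polynomial.natDegree_comp, hrq, Polynomial.natDegree_X]
  have hqdeg : q.natDegree = 1 := Nat.eq_one_of_mul_eq_one_left hdeg
  have hqform : q = Polynomial.C (q.coeff 1) * Polynomial.X + Polynomial.C (q.coeff 0) :=
    Polynomial.eq_X_add_C_of_natDegree_le_one hqdeg.le
  -- leading coefficient is a unit
  have hunit : IsUnit (q.coeff 1) := by
    have h1 : (Polynomial.C (q.coeff 1) * Polynomial.X + Polynomial.C (q.coeff 0)).comp r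
        = Polynomial.X := by rw [← hqform, hqr]
    have h2 : Polynomial.C (q.coeff 1) * r + Polynomial.C (q.coeff 0) = Polynomial.X := by
      simpa using h1
    have h3 := congr_arg (fun p : Polynomial (Polynomial R) => p.coeff 1) h2
    simp only [Polynomial.coeff_add, Polynomial.coeff_C_mul, Polynomial.coeff_C,
      Polynomial.coeff_X_one, one_ne_zero, if_false, add_zero] at h3
    exact IsUnit.of_mul_eq_one _ h3
  obtain ⟨u, hu, huq⟩ := Polynomial.isUnit_iff.mp hunit
  obtain ⟨α, hα, hαu⟩ := Polynomial.isUnit_iff.mp hu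
  right
  refine ⟨α, hα.ne_zero, q.coeff 0, h, ?_⟩
  have hσX0 : σ (X 0) = (E F).symm q := by
    rw [hq, hτ_apply, ← E_X0 F, AlgEquiv.symm_apply_apply, AlgEquiv.symm_apply_apply]
  have hq1 : q.coeff 1 = Polynomial.C (Polynomial.C α) := by rw [← huq, ← hαu]
  have hqform2 : q = Polynomial.C (Polynomial.C (Polynomial.C α)) * Polynomial.X
      + Polynomial.C (q.coeff 0) := by
    conv_lhs => rw [hqform]
    rw [hq1]
  conv_lhs => rw [hσX0, hqform2]
  rw [map_add, map_mul, Esymm_X, Esymm_C, Esymm_C, Polynomial.aeval_C,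
    MvPolynomial.algebraMap_eq]

/-- The automorphism of `F[z][x,y]` exchanging `x` and `y`. -/
def swapE : B ≃ₐ[R] B := MvPolynomial.renameEquiv R (Equiv.swap (0 : Fin 2) 1)

@[simp] lemma swapE_X0 : swapE F (X 0) = X 1 := by
  show rename _ (X 0) = _
  rw [rename_X, Equiv.swap_apply_left]

@[simp] lemma swapE_X1 : swapE F (X 1) = X 0 := by
  show rename _ (X 1) = _
  rw [rename_X, Equiv.swap_apply_right]

lemma swapE_linear : IsLinear F (swapE F) := by
  refine ⟨0, 1, 1, 0, 0, 0, ?_, ?_, ?_⟩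
  · simp
  · simp
  · simp

lemma swapE_mem : swapE F ∈ Subgroup.closure {ψ | IsElementary F ψ ∨ IsLinear F ψ} :=
  Subgroup.subset_closure (Or.inr (swapE_linear F))

lemma mem_closure_of_fix_X0 (σ : B ≃ₐ[R] B) (h : σ (X 0) = X 0) :
    σ ∈ Subgroup.closure {ψ | IsElementary F ψ ∨ IsLinear F ψ} := by
  have h1 : (swapE F * σ * swapE F) (X 1) = X 1 := by
    rw [AlgEquiv.mul_apply, AlgEquiv.mul_apply, swapE_X1, h, swapE_X0]
  have h2 : swapE F * σ * swapE F ∈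
      Subgroup.closure {ψ | IsElementary F ψ ∨ IsLinear F ψ} :=
    Subgroup.subset_closure (Or.inl (elementary_of_fix_X1 F _ h1))
  have h3 : σ = (swapE F)⁻¹ * (swapE F * σ * swapE F) * (swapE F)⁻¹ := by group
  rw [h3]
  exact mul_mem (mul_mem (inv_mem (swapE_mem F)) h2) (inv_mem (swapE_mem F))

/-- Two automorphisms sharing the first component are simultaneously wild. -/
lemma wild_of_share (φ θ : B ≃ₐ[R] B) (hw : IsWild F φ) (h : θ (X 0) = φ (X 0)) :
    IsWild F θ := by
  intro hθ
  have hσ : (φ⁻¹ * θ) (X 0) = X 0 := by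
    rw [AlgEquiv.mul_apply, h]
    exact φ.symm_apply_apply _
  have hmem := mem_closure_of_fix_X0 F _ hσ
  apply hw
  have hφ : φ = θ * (φ⁻¹ * θ)⁻¹ := by group
  rw [hφ]
  exact mul_mem hθ (inv_mem hmem)

lemma isWild_mul_swapE_iff (φ : B ≃ₐ[R] B) :
    IsWild F (φ * swapE F) ↔ IsWild F φ := by
  constructor
  · intro h hφ
    exact h (mul_mem hφ (swapE_mem F))
  · intro h hφ'
    apply h
    have : φ = (φ * swapE F) * (swapE F)⁻¹ := by group
    rw [this]
    exact mul_mem hφ' (inv_mem (swapE_mem F))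

lemma ab_i0 : ab F (FreeAlgebra.ι F 0) = X 0 := by
  simp [ab]

lemma ab_i1 : ab F (FreeAlgebra.ι F 1) = X 1 := by
  simp [ab]

lemma ab_i2 : ab F (FreeAlgebra.ι F 2) = C Polynomial.X := by
  simp [ab]

/-- A component of an automorphism is never the constant `z`. -/
lemma not_const (φ : B ≃ₐ[R] B) (j : Fin 2) :
    φ (X j) ≠ C Polynomial.X := by
  intro hc
  have h1 : (X j : B) = C Polynomial.X := by
    have := congr_arg φ.symm hc
    rw [AlgEquiv.symm_apply_apply] at this
    rw [this, ← MvPolynomial.algebraMap_eq, AlgEquiv.commutes]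
  have h2 := congr_arg MvPolynomial.constantCoeff h1
  rw [MvPolynomial.constantCoeff_X, MvPolynomial.constantCoeff_C] at h2
  exact Polynomial.X_ne_zero h2.symm

/-- If every wild `F[z]`-automorphism of `F[z][x,y]` fails to lift to a `z`-fixing
automorphism of `F⟨x,y,z⟩`, then no component of a wild automorphism can occur as
the abelianization of a component of a `z`-fixing automorphism of `F⟨x,y,z⟩`;
in particular no such component lifts to a `z`-coordinate. -/
theorem wild_components_not_z_coordinates
    (H : ∀ φ : MvPolynomial (Fin 2) (Polynomial F) ≃ₐ[Polynomial F]
        MvPolynomial (Fin 2) (Polynomial F),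
      IsWild F φ → ¬ LiftsToZAut F (φ (X 0)) (φ (X 1))) :
    ∀ φ : MvPolynomial (Fin 2) (Polynomial F) ≃ₐ[Polynomial F]
        MvPolynomial (Fin 2) (Polynomial F),
      IsWild F φ →
      ¬ ∃ (ψ : FreeAlgebra F (Fin 3) ≃ₐ[F] FreeAlgebra F (Fin 3)) (i : Fin 3),
          ψ (FreeAlgebra.ι F 2) = FreeAlgebra.ι F 2 ∧
          (ab F (ψ (FreeAlgebra.ι F i)) = φ (X 0) ∨
           ab F (ψ (FreeAlgebra.ι F i)) = φ (X 1)) := by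
  intro φ hw
  rintro ⟨ψ, i, hz, hcase⟩
  have hz' : ψ.symm (FreeAlgebra.ι F 2) = FreeAlgebra.ι F 2 := by
    conv_lhs => rw [← hz]
    exact ψ.symm_apply_apply _
  -- the abelianized automorphism θ
  set a : B := ab F (ψ (FreeAlgebra.ι F 0)) with ha
  set b : B := ab F (ψ (FreeAlgebra.ι F 1)) with hb
  set a' : B := ab F (ψ.symm (FreeAlgebra.ι F 0)) with ha'
  set b' : B := ab F (ψ.symm (FreeAlgebra.ι F 1)) with hb'
  set θfwd : B →ₐ[R] B := MvPolynomial.aeval (![a, b] : Fin 2 → B) with hθfwd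
  set θbwd : B →ₐ[R] B := MvPolynomial.aeval (![a', b'] : Fin 2 → B) with hθbwd
  have hcomm : ∀ w, θfwd (ab F w) = ab F (ψ w) := by
    have h0 : θfwd (ab F (FreeAlgebra.ι F 0)) = ab F (ψ (FreeAlgebra.ι F 0)) := by
      rw [ab_i0, hθfwd]
      simp only [MvPolynomial.aeval_X, Matrix.cons_val_zero]
      exact ha
    have h1 : θfwd (ab F (FreeAlgebra.ι F 1)) = ab F (ψ (FreeAlgebra.ι F 1)) := by
      rw [ab_i1, hθfwd]
      simp only [MvPolynomial.aeval_X, Matrix.cons_val_one, Matrix.head_cons, Matrix.cons_val_zero]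
      exact hb
    have h2 : θfwd (ab F (FreeAlgebra.ι F 2)) = ab F (ψ (FreeAlgebra.ι F 2)) := by
      rw [ab_i2, hz, ab_i2, ← MvPolynomial.algebraMap_eq]
      exact θfwd.commutes _
    have heq : (θfwd.restrictScalars F).comp (ab F) = (ab F).comp ψ.toAlgHom := by
      apply FreeAlgebra.hom_ext
      funext j
      fin_cases j
      · exact h0
      · exact h1
      · exact h2
    intro w
    exact AlgHom.congr_fun heq w
  have hcomm' : ∀ w, θbwd (ab F w) = ab F (ψ.symm w) := by
    have h0 : θbwd (ab F (FreeAlgebra.ι F 0)) = ab F (ψ.symm (FreeAlgebra.ι F 0)) := by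
      rw [ab_i0, hθbwd]
      simp only [MvPolynomial.aeval_X, Matrix.cons_val_zero]
      exact ha'
    have h1 : θbwd (ab F (FreeAlgebra.ι F 1)) = ab F (ψ.symm (FreeAlgebra.ι F 1)) := by
      rw [ab_i1, hθbwd]
      simp only [MvPolynomial.aeval_X, Matrix.cons_val_one, Matrix.head_cons, Matrix.cons_val_zero]
      exact hb'
    have h2 : θbwd (ab F (FreeAlgebra.ι F 2)) = ab F (ψ.symm (FreeAlgebra.ι F 2)) := by
      rw [ab_i2, hz', ab_i2, ← MvPolynomial.algebraMap_eq]
      exact θbwd.commutes _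
    have heq : (θbwd.restrictScalars F).comp (ab F) = (ab F).comp ψ.symm.toAlgHom := by
      apply FreeAlgebra.hom_ext
      funext j
      fin_cases j
      · exact h0
      · exact h1
      · exact h2
    intro w
    exact AlgHom.congr_fun heq w
  set θ : B ≃ₐ[R] B := AlgEquiv.ofAlgHom θfwd θbwd
    (by
      apply MvPolynomial.algHom_ext
      intro j
      fin_cases j
      · show θfwd (θbwd (X 0)) = X 0
        have : θbwd (X 0) = a' := by simp [hθbwd]
        rw [this, ha', hcomm, AlgEquiv.apply_symm_apply, ab_i0]
      · show θfwd (θbwd (X 1)) = X 1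
        have : θbwd (X 1) = b' := by simp [hθbwd]
        rw [this, hb', hcomm, AlgEquiv.apply_symm_apply, ab_i1])
    (by
      apply MvPolynomial.algHom_ext
      intro j
      fin_cases j
      · show θbwd (θfwd (X 0)) = X 0
        have : θfwd (X 0) = a := by simp [hθfwd]
        rw [this, ha, hcomm', AlgEquiv.symm_apply_apply, ab_i0]
      · show θbwd (θfwd (X 1)) = X 1
        have : θfwd (X 1) = b := by simp [hθfwd]
        rw [this, hb, hcomm', AlgEquiv.symm_apply_apply, ab_i1]) with hθ
  have hθ0 : θ (X 0) = a := by
    show θfwd (X 0) = a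
    simp [hθfwd]
  have hθ1 : θ (X 1) = b := by
    show θfwd (X 1) = b
    simp [hθfwd]
  have hlift : LiftsToZAut F (θ (X 0)) (θ (X 1)) :=
    ⟨ψ, hz, by rw [hθ0], by rw [hθ1]⟩
  -- θ is wild
  have hwθ : IsWild F θ := by
    fin_cases i
    · rcases hcase with hc | hc
      · have hc' : a = φ (X 0) := hc
        exact wild_of_share F φ θ hw (by rw [hθ0, hc'])
      · have hc' : a = φ (X 1) := hc
        have hw' : IsWild F (φ * swapE F) := (isWild_mul_swapE_iff F φ).mpr hw
        refine wild_of_share F (φ * swapE F) θ hw' ?_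
        rw [hθ0, hc', AlgEquiv.mul_apply, swapE_X0]
    · have key : IsWild F (θ * swapE F) := by
        rcases hcase with hc | hc
        · have hc' : b = φ (X 0) := hc
          refine wild_of_share F φ (θ * swapE F) hw ?_
          rw [AlgEquiv.mul_apply, swapE_X0, hθ1, hc']
        · have hc' : b = φ (X 1) := hc
          have hw' : IsWild F (φ * swapE F) := (isWild_mul_swapE_iff F φ).mpr hw
          refine wild_of_share F (φ * swapE F) (θ * swapE F) hw' ?_
          rw [AlgEquiv.mul_apply, swapE_X0, hθ1, hc', AlgEquiv.mul_apply, swapE_X0]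
      exact (isWild_mul_swapE_iff F θ).mp key
    · rcases hcase with hc | hc
      · have hc' : C Polynomial.X = φ (X 0) := by
          rw [← ab_i2 F, ← hz]
          exact hc
        exact absurd hc'.symm (not_const F φ 0)
      · have hc' : C Polynomial.X = φ (X 1) := by
          rw [← ab_i2 F, ← hz]
          exact hc
        exact absurd hc'.symm (not_const F φ 1)
  exact H θ hwθ hlift

end
end

section
/- In the free associative algebra F⟨x,y⟩ over a field F, for any nonzero polynomial H(x₁,...,xₘ) of the multilinear form H = Σᵢ q_{i,1} x₁ q_{i,2} x₂ ⋯ xₘ q_{i,m+1} with coefficients q_{i,j} ∈ F, if H(x,x,...,x) ≠ 0 then for any nonconstant S ∈ F⟨x,y⟩ we have H(S,S,...,S) ≠ 0. -/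
noncomputable section

open FreeAlgebra

/-- Evaluation of the multilinear noncommutative polynomial
`H = Σᵢ q_{i,1} x₁ q_{i,2} x₂ ⋯ xₘ q_{i,m+1}` (with scalar coefficients
`q i j ∈ F`) at a vector `v` of elements of an `F`-algebra `A`. -/
def mlEval {F : Type} [Field F] {A : Type} [Ring A] [Algebra F A]
    {κ : Type} (t : Finset κ) (m : ℕ) (q : κ → Fin (m + 1) → F)
    (v : Fin m → A) : A :=
  ∑ i ∈ t,
    (List.ofFn fun j : Fin m => algebraMap F A (q i j.castSucc) * v j).prod *
      algebraMap F A (q i (Fin.last m))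

lemma list_prod_smul {F : Type} [Field F] {A : Type} [Ring A] [Algebra F A]
    (m : ℕ) (c : Fin m → F) (S : A) :
    (List.ofFn fun j : Fin m => algebraMap F A (c j) * S).prod
      = (∏ j, c j) • S ^ m := by
  induction m with
  | zero => simp
  | succ n ih =>
    rw [List.ofFn_succ, List.prod_cons, ih (fun j => c j.succ),
      Fin.prod_univ_succ, Algebra.smul_def, Algebra.smul_def,
      map_mul, mul_assoc, ← mul_assoc S, ← Algebra.commutes (∏ j : Fin n, c j.succ) S,
      mul_assoc, ← pow_succ', ← mul_assoc]

lemma mlEval_const {F : Type} [Field F] {A : Type} [Ring A] [Algebra F A]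
    {κ : Type} (t : Finset κ) (m : ℕ) (q : κ → Fin (m + 1) → F) (S : A) :
    mlEval t m q (fun _ => S) = (∑ i ∈ t, ∏ j, q i j) • S ^ m := by
  unfold mlEval
  rw [Finset.sum_smul]
  refine Finset.sum_congr rfl fun i _ => ?_
  rw [list_prod_smul m (fun j => q i j.castSucc) S, Fin.prod_univ_castSucc,
    Algebra.smul_def, Algebra.smul_def, mul_assoc,
    ← Algebra.commutes (q i (Fin.last m)) (S ^ m), ← mul_assoc, ← map_mul]

/-- In `F⟨x,y⟩`: if a multilinear polynomial `H` with scalar coefficients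
satisfies `H(x, x, ..., x) ≠ 0`, then `H(S, S, ..., S) ≠ 0` for every
nonconstant `S ∈ F⟨x,y⟩`. -/
theorem multilinear_subst_ne_zero {F : Type} [Field F]
    {κ : Type} (t : Finset κ) (m : ℕ) (q : κ → Fin (m + 1) → F)
    (hx : mlEval t m q (fun _ => (ι F 0 : FreeAlgebra F (Fin 2))) ≠ 0)
    (S : FreeAlgebra F (Fin 2))
    (hS : S ∉ Set.range (algebraMap F (FreeAlgebra F (Fin 2)))) :
    mlEval t m q (fun _ => S) ≠ 0 := by
  rw [mlEval_const] at hx ⊢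
  have hc : (∑ i ∈ t, ∏ j, q i j) ≠ 0 := fun h => hx (by rw [h, zero_smul])
  have hS0 : S ≠ 0 := fun h => hS ⟨0, by simp [h]⟩
  exact smul_ne_zero hc (pow_ne_zero m hS0)

end
end

section
/- The F-subalgebra of F[x,y,z] generated by the Nagata components f = x - 2y(y²+xz) - (y²+xz)²z, g = y + (y²+xz)z, and z equals all of F[x,y,z]. -/
open MvPolynomial

/-- The `F`-subalgebra of `F[x,y,z]` generated by the Nagata components
`f = x - 2y(y²+xz) - (y²+xz)²z`, `g = y + (y²+xz)z` and `z` is all of `F[x,y,z]`. -/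
theorem nagata_components_generate (F : Type) [Field F] [CharZero F] :
    Algebra.adjoin F
      ({X 0 - 2 * X 1 * (X 1 ^ 2 + X 0 * X 2) - (X 1 ^ 2 + X 0 * X 2) ^ 2 * X 2,
        X 1 + (X 1 ^ 2 + X 0 * X 2) * X 2,
        X 2} : Set (MvPolynomial (Fin 3) F)) = ⊤ := by
  set f : MvPolynomial (Fin 3) F :=
    X 0 - 2 * X 1 * (X 1 ^ 2 + X 0 * X 2) - (X 1 ^ 2 + X 0 * X 2) ^ 2 * X 2 with hf
  set g : MvPolynomial (Fin 3) F := X 1 + (X 1 ^ 2 + X 0 * X 2) * X 2 with hg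
  set A := Algebra.adjoin F ({f, g, X 2} : Set (MvPolynomial (Fin 3) F)) with hA
  have hfA : f ∈ A := Algebra.subset_adjoin (by simp)
  have hgA : g ∈ A := Algebra.subset_adjoin (by simp)
  have hzA : X 2 ∈ A := Algebra.subset_adjoin (by simp)
  have hw : g ^ 2 + f * X 2 = X 1 ^ 2 + X 0 * X 2 := by rw [hf, hg]; ring
  have hwA : (X 1 ^ 2 + X 0 * X 2 : MvPolynomial (Fin 3) F) ∈ A := by
    rw [← hw]; exact add_mem (pow_mem hgA 2) (mul_mem hfA hzA)
  have hy : X 1 ∈ A := by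
    have : (X 1 : MvPolynomial (Fin 3) F) = g - (X 1 ^ 2 + X 0 * X 2) * X 2 := by
      rw [hg]; ring
    rw [this]; exact sub_mem hgA (mul_mem hwA hzA)
  have hx : X 0 ∈ A := by
    have : (X 0 : MvPolynomial (Fin 3) F) =
        f + 2 * X 1 * (X 1 ^ 2 + X 0 * X 2) + (X 1 ^ 2 + X 0 * X 2) ^ 2 * X 2 := by
      rw [hf]; ring
    rw [this]
    have h2 : (2 : MvPolynomial (Fin 3) F) ∈ A := by
      exact_mod_cast Subalgebra.natCast_mem A 2
    exact add_mem (add_mem hfA (mul_mem (mul_mem h2 hy) hwA)) (mul_mem (pow_mem hwA 2) hzA)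
  rw [eq_top_iff, ← MvPolynomial.adjoin_range_X]
  apply Algebra.adjoin_le
  rintro _ ⟨i, rfl⟩
  fin_cases i <;> assumption
end
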